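/- arXiv:2601.10603 — 3 statements merged into one kernel-verified Lean document; each statement's English description precedes it below -/
import Mathlib

section
/- Let F be a field and let D be a Δ × (Δ+M−1) matrix over F of rank Δ, where Δ, M ≥ 1. Then there exist an invertible Δ × Δ matrix C over F and a Δ × (Δ+M−1) matrix A over F such that D = C·A and every row of A has at most M nonzero entries. -/
open scoped Classical
open Matrix

/-- A Δ × (Δ+M−1) matrix of rank Δ over a field factors as an invertible Δ×Δ
matrix times a matrix whose rows have at most M nonzero entries. -/
theorem stmt5 (F : Type*) [Field F] (Δ M : ℕ) (hΔ : 1 ≤ Δ) (hM : 1 ≤ M)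
    (D : Matrix (Fin Δ) (Fin (Δ + M - 1)) F) (hrank : D.rank = Δ) :
    ∃ (C : Matrix (Fin Δ) (Fin Δ) F) (A : Matrix (Fin Δ) (Fin (Δ + M - 1)) F),
      IsUnit C ∧ D = C * A ∧
        ∀ r, (Finset.univ.filter (fun k => A r k ≠ 0)).card ≤ M := by
  -- the columns of D span F^Δ
  have hspan : Submodule.span F (Set.range Dᵀ) = ⊤ := by
    apply Submodule.eq_top_of_finrank_eq
    have h := Matrix.rank_eq_finrank_span_cols D
    rw [hrank] at h
    rw [Module.finrank_fin_fun]
    exact h.symm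
  obtain ⟨t, hts, htspan, htli⟩ := exists_linearIndependent F (Set.range Dᵀ)
  rw [hspan] at htspan
  have bfin : t.Finite := htli.setFinite
  haveI : Fintype t := bfin.fintype
  have b : Module.Basis t F (Fin Δ → F) :=
    Module.Basis.mk htli (by rw [Subtype.range_coe, htspan])
  have hcard : Fintype.card t = Δ := by
    have h1 := Module.finrank_eq_card_basis b
    rw [Module.finrank_fin_fun] at h1
    omega
  let e : Fin Δ ≃ t := (Fintype.equivFinOfCardEq hcard).symm
  -- choose, for each element of t, a column index realizing it
  have hchoice : ∀ v : t, ∃ j, Dᵀ j = (v : Fin Δ → F) := fun v => hts v.2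
  choose f hf using hchoice
  let g : Fin Δ → Fin (Δ + M - 1) := fun i => f (e i)
  have hg : Function.Injective g := by
    intro i j hij
    have : (e i : Fin Δ → F) = (e j : Fin Δ → F) := by
      rw [← hf (e i), ← hf (e j)]; exact congrArg _ hij
    exact e.injective (Subtype.ext this)
  set B : Matrix (Fin Δ) (Fin Δ) F := D.submatrix id g with hBdef
  have hBcols : LinearIndependent F (fun i => Bᵀ i) := by
    have : (fun i => Bᵀ i) = fun i => ((e i : Fin Δ → F)) := by
      funext i
      rw [← hf (e i)]
      rfl
    rw [this]
    exact htli.comp e e.injective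
  have hB : IsUnit B := Matrix.linearIndependent_cols_iff_isUnit.mp hBcols
  have hdet : IsUnit B.det := (Matrix.isUnit_iff_isUnit_det B).mp hB
  refine ⟨B, B⁻¹ * D, hB, ?_, ?_⟩
  · rw [← Matrix.mul_assoc, Matrix.mul_nonsing_inv _ hdet, Matrix.one_mul]
  · intro r
    have key : ∀ j : Fin Δ, (B⁻¹ * D) r (g j) = (1 : Matrix (Fin Δ) (Fin Δ) F) r j := by
      intro j
      rw [← Matrix.nonsing_inv_mul _ hdet]
      simp [Matrix.mul_apply, hBdef, Matrix.submatrix_apply]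
    have hsub : (Finset.univ.filter (fun k => (B⁻¹ * D) r k ≠ 0)) ⊆
        insert (g r) ((Finset.univ.image g)ᶜ) := by
      intro k hk
      simp only [Finset.mem_filter, Finset.mem_univ, true_and] at hk
      by_cases hkim : k ∈ Finset.univ.image g
      · obtain ⟨j, -, rfl⟩ := Finset.mem_image.mp hkim
        rcases eq_or_ne j r with rfl | hjr
        · exact Finset.mem_insert_self _ _
        · exfalso
          apply hk
          rw [key j, Matrix.one_apply_ne (Ne.symm hjr)]
      · exact Finset.mem_insert_of_mem (Finset.mem_compl.mpr hkim)
    calc (Finset.univ.filter (fun k => (B⁻¹ * D) r k ≠ 0)).card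
        ≤ (insert (g r) ((Finset.univ.image g)ᶜ)).card := Finset.card_le_card hsub
      _ ≤ ((Finset.univ.image g)ᶜ).card + 1 := Finset.card_insert_le _ _
      _ ≤ M := by
          simp only [Finset.card_compl, Finset.card_image_of_injective _ hg,
            Finset.card_univ, Fintype.card_fin]
          omega
end

section
/- Let q be a prime power and L, K, R, Δ, M positive integers with Δ ≤ L, M ≤ K. Suppose every matrix D ∈ F_q^{L×K} can be written as D = C·A where C ∈ F_q^{L×R} has Δ-sparse nonzero columns and A ∈ F_q^{R×K} has M-sparse rows. Then (q−1)^R · q^{LK} ≤ (binomial(L,Δ) · q^Δ)^R · (binomial(K,M) · q^M)^R. -/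
section Enc

variable {F : Type*} [Zero F] {n Δ : ℕ}

/-- Encode a vector together with a chosen size-Δ superset of its support. -/
noncomputable def encV (v : Fin n → F)
    (h : ∃ S : Finset (Fin n), (∀ l, v l ≠ 0 → l ∈ S) ∧ S.card = Δ) :
    {S : Finset (Fin n) // S.card = Δ} × (Fin Δ → F) :=
  ⟨⟨h.choose, h.choose_spec.2⟩, fun i => v (h.choose.orderIsoOfFin h.choose_spec.2 i)⟩

/-- Decode. -/
noncomputable def decV (p : {S : Finset (Fin n) // S.card = Δ} × (Fin Δ → F)) :
    Fin n → F :=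
  fun l => if hl : l ∈ p.1.1 then p.2 ((p.1.1.orderIsoOfFin p.1.2).symm ⟨l, hl⟩) else 0

lemma decV_encV (v : Fin n → F)
    (h : ∃ S : Finset (Fin n), (∀ l, v l ≠ 0 → l ∈ S) ∧ S.card = Δ) :
    decV (encV v h) = v := by
  funext l
  simp only [decV, encV]
  split_ifs with hl
  · simp [hl, -Finset.coe_orderIsoOfFin_apply]
    exact congrArg v (congrArg Subtype.val ((h.choose.orderIsoOfFin h.choose_spec.2).apply_symm_apply ⟨l, hl⟩))
  · by_contra hne
    exact hl (h.choose_spec.1 l (fun h0 => hne (by simp [hl, h0])))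

end Enc

/-- Counting bound: if every L×K matrix over F_q factors as C·A with C having
Δ-sparse nonzero columns and A having M-sparse rows (inner dimension R), then
(q−1)^R · q^{LK} ≤ (C(L,Δ)·q^Δ)^R · (C(K,M)·q^M)^R. -/
theorem stmt11 (F : Type*) [Field F] [Fintype F] (q L K R Δ M : ℕ)
    (hq : Fintype.card F = q)
    (hL : 1 ≤ L) (hK : 1 ≤ K) (hR : 1 ≤ R)
    (hΔ : 1 ≤ Δ) (hM : 1 ≤ M) (hΔL : Δ ≤ L) (hMK : M ≤ K)
    (hfact : ∀ D : Matrix (Fin L) (Fin K) F,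
      ∃ (C : Matrix (Fin L) (Fin R) F) (A : Matrix (Fin R) (Fin K) F),
        D = C * A ∧
        (∀ r, (∃ l, C l r ≠ 0) ∧ Nat.card {l : Fin L // C l r ≠ 0} ≤ Δ) ∧
        (∀ r, Nat.card {k : Fin K // A r k ≠ 0} ≤ M)) :
    (q - 1) ^ R * q ^ (L * K) ≤
      (L.choose Δ * q ^ Δ) ^ R * (K.choose M * q ^ M) ^ R := by
  classical
  choose C A hCA hCcol hArow using hfact
  -- existence of size-Δ supersets of supports of scaled columns of C
  have hexC : ∀ (D : Matrix (Fin L) (Fin K) F) (u : Fˣ) (r : Fin R),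
      ∃ S : Finset (Fin L), (∀ l, C D l r * (u : F) ≠ 0 → l ∈ S) ∧ S.card = Δ := by
    intro D u r
    have hcard : (Finset.univ.filter (fun l => C D l r ≠ 0)).card ≤ Δ := by
      have := (hCcol D r).2
      rwa [Nat.card_eq_fintype_card, Fintype.card_subtype] at this
    obtain ⟨S, hS, hSc⟩ := Finset.exists_superset_card_eq hcard
      (by simpa using hΔL)
    refine ⟨S, fun l hl => hS ?_, hSc⟩
    simp only [Finset.mem_filter, Finset.mem_univ, true_and]
    exact fun h0 => hl (by simp [h0])
  have hexA : ∀ (D : Matrix (Fin L) (Fin K) F) (u : Fˣ) (r : Fin R),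
      ∃ S : Finset (Fin K), (∀ k, (u : F) * A D r k ≠ 0 → k ∈ S) ∧ S.card = M := by
    intro D u r
    have hcard : (Finset.univ.filter (fun k => A D r k ≠ 0)).card ≤ M := by
      have := hArow D r
      rwa [Nat.card_eq_fintype_card, Fintype.card_subtype] at this
    obtain ⟨S, hS, hSc⟩ := Finset.exists_superset_card_eq hcard
      (by simpa using hMK)
    refine ⟨S, fun k hk => hS ?_, hSc⟩
    simp only [Finset.mem_filter, Finset.mem_univ, true_and]
    exact fun h0 => hk (by simp [h0])
  -- the injection
  set EncC := ({S : Finset (Fin L) // S.card = Δ} × (Fin Δ → F)) with hEncC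
  set EncA := ({S : Finset (Fin K) // S.card = M} × (Fin M → F)) with hEncA
  let f : ((Fin R → Fˣ) × Matrix (Fin L) (Fin K) F) →
      (Fin R → EncC) × (Fin R → EncA) :=
    fun p =>
      ⟨fun r => encV (fun l => C p.2 l r * (p.1 r : F)) (hexC p.2 (p.1 r) r),
       fun r => encV (fun k => (((p.1 r)⁻¹ : Fˣ) : F) * A p.2 r k) (hexA p.2 (p.1 r)⁻¹ r)⟩
  have hf : Function.Injective f := by
    intro p p' h
    obtain ⟨h1, h2⟩ := Prod.mk.injEq .. ▸ h
    have hc : ∀ r, (fun l => C p.2 l r * (p.1 r : F)) =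
        (fun l => C p'.2 l r * (p'.1 r : F)) := by
      intro r
      rw [← decV_encV (fun l => C p.2 l r * (p.1 r : F)) (hexC p.2 (p.1 r) r),
          ← decV_encV (fun l => C p'.2 l r * (p'.1 r : F)) (hexC p'.2 (p'.1 r) r)]
      exact congrArg decV (congrFun h1 r)
    have ha : ∀ r, (fun k => (((p.1 r)⁻¹ : Fˣ) : F) * A p.2 r k) =
        (fun k => (((p'.1 r)⁻¹ : Fˣ) : F) * A p'.2 r k) := by
      intro r
      rw [← decV_encV _ (hexA p.2 (p.1 r)⁻¹ r), ← decV_encV _ (hexA p'.2 (p'.1 r)⁻¹ r)]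
      exact congrArg decV (congrFun h2 r)
    -- reconstruct the matrices
    have hD : p.2 = p'.2 := by
      have key : ∀ (s : (Fin R → Fˣ) × Matrix (Fin L) (Fin K) F) (l : Fin L) (k : Fin K),
          s.2 l k = ∑ r, (C s.2 l r * (s.1 r : F)) * ((((s.1 r)⁻¹ : Fˣ) : F) * A s.2 r k) := by
        intro s l k
        have := hCA s.2
        have h2 : s.2 l k = ∑ r, C s.2 l r * A s.2 r k := by
          conv_lhs => rw [this]
          rfl
        rw [h2]
        refine Finset.sum_congr rfl fun r _ => ?_
        have : (s.1 r : F) * (((s.1 r)⁻¹ : Fˣ) : F) = 1 := by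
          rw [← Units.val_mul, mul_inv_cancel, Units.val_one]
        rw [mul_assoc, ← mul_assoc ((s.1 r : F)), this, one_mul]
      funext l k
      rw [key p l k, key p' l k]
      refine Finset.sum_congr rfl fun r _ => ?_
      rw [congrFun (hc r) l, congrFun (ha r) k]
    have hu : p.1 = p'.1 := by
      funext r
      obtain ⟨l, hl⟩ := (hCcol p.2 r).1
      have := congrFun (hc r) l
      rw [hD] at hl this
      exact Units.ext (mul_left_cancel₀ hl this)
    exact Prod.ext hu hD
  -- cardinalities
  have hcard := Fintype.card_le_of_injective f hf
  have hdom : Fintype.card ((Fin R → Fˣ) × Matrix (Fin L) (Fin K) F)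
      = (q - 1) ^ R * q ^ (L * K) := by
    rw [Fintype.card_prod, Fintype.card_fun]
    have : Fintype.card (Matrix (Fin L) (Fin K) F) = q ^ (L * K) := by
      show Fintype.card (Fin L → Fin K → F) = q ^ (L * K)
      rw [Fintype.card_fun, Fintype.card_fun, hq, Fintype.card_fin, Fintype.card_fin,
        ← pow_mul, mul_comm K L]
    rw [this, Fintype.card_units, hq, Fintype.card_fin]
  have hEncCcard : Fintype.card EncC = L.choose Δ * q ^ Δ := by
    show Fintype.card ({S : Finset (Fin L) // S.card = Δ} × (Fin Δ → F)) = _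
    rw [Fintype.card_prod, Fintype.card_finset_len, Fintype.card_fun,
      Fintype.card_fin, Fintype.card_fin, hq]
  have hEncAcard : Fintype.card EncA = K.choose M * q ^ M := by
    show Fintype.card ({S : Finset (Fin K) // S.card = M} × (Fin M → F)) = _
    rw [Fintype.card_prod, Fintype.card_finset_len, Fintype.card_fun,
      Fintype.card_fin, Fintype.card_fin, hq]
  have hcod : Fintype.card ((Fin R → EncC) × (Fin R → EncA))
      = (L.choose Δ * q ^ Δ) ^ R * (K.choose M * q ^ M) ^ R := by
    rw [Fintype.card_prod, Fintype.card_fun, Fintype.card_fun, Fintype.card_fin,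
      hEncCcard, hEncAcard]
  rwa [hdom, hcod] at hcard
end

section
/- Let F be an infinite field and let L, K, Δ, M be positive integers with Δ | L and (Δ+M−1) | K. Then every matrix D ∈ F^{L×K} admits a factorization D = C·A with C ∈ F^{L×R} and A ∈ F^{R×K}, where R = L·K/(Δ+M−1), every column of C has at most Δ nonzero entries, and every row of A has at most M nonzero entries. -/
open Submodule in
lemma exists_spanning_cols (F : Type*) [Field F] (Δ n : ℕ) (hn : Δ ≤ n)
    (c : Fin n → (Fin Δ → F)) :
    ∃ S : Finset (Fin n), S.card = Δ ∧ ∀ k, c k ∈ Submodule.span F (c '' ↑S) := by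
  classical
  obtain ⟨s, hst, hspan, hind⟩ := exists_linearIndependent F (Set.range c)
  have hsfin : s.Finite := (Set.finite_range c).subset hst
  haveI : Fintype s := hsfin.fintype
  have hcard : s.toFinset.card ≤ Δ := by
    rw [← finrank_span_set_eq_card hind]
    simpa using (Submodule.finrank_le (Submodule.span F s))
  have h1 : ∀ x : s, ∃ k, c k = x := fun x => hst x.2
  choose g hg using h1
  set T : Finset (Fin n) := Finset.univ.image g with hT
  have hTcard : T.card ≤ Δ := le_trans (Finset.card_image_le.trans (by simp [Set.toFinset_card] at hcard ⊢; omega)) le_rfl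
  have hcT : c '' ↑T = s := by
    ext y
    constructor
    · rintro ⟨x, hx, rfl⟩
      simp only [hT, Finset.coe_image, Finset.coe_univ, Set.image_univ] at hx
      obtain ⟨z, rfl⟩ := hx
      rw [hg z]; exact z.2
    · intro hy
      exact ⟨g ⟨y, hy⟩, by simp [hT], hg ⟨y, hy⟩⟩
  obtain ⟨S, hTS, -, hScard⟩ := Finset.exists_subsuperset_card_eq (Finset.subset_univ T)
    hTcard (by simpa using hn)
  refine ⟨S, hScard, fun k => ?_⟩
  have : c k ∈ Submodule.span F (c '' ↑T) := by
    rw [hcT, hspan]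
    exact Submodule.subset_span (Set.mem_range_self k)
  exact Submodule.span_mono (Set.image_mono (by exact_mod_cast hTS)) this



lemma block_factor (F : Type*) [Field F] (Δ m : ℕ)
    (B : Matrix (Fin Δ) (Fin (Δ + m)) F) :
    ∃ (P : Matrix (Fin Δ) (Fin Δ) F) (Q : Matrix (Fin Δ) (Fin (Δ + m)) F),
      B = P * Q ∧ ∀ i, Nat.card {k : Fin (Δ + m) // Q i k ≠ 0} ≤ m + 1 := by
  classical
  set c : Fin (Δ + m) → (Fin Δ → F) := fun k i => B i k with hc
  obtain ⟨S, hScard, hSspan⟩ := exists_spanning_cols F Δ (Δ + m) (Nat.le_add_right _ _) c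
  set e := S.orderIsoOfFin hScard with he
  set ε : Fin Δ → Fin (Δ + m) := fun j => (e j : Fin (Δ + m)) with hε
  have hεS : ∀ j, ε j ∈ S := fun j => (e j).2
  have hεsymm : ∀ (k) (hk : k ∈ S), ε (e.symm ⟨k, hk⟩) = k := by
    intro k hk
    simp [hε]
  have hrange : c '' ↑S = Set.range (fun j => c (ε j)) := by
    ext y
    constructor
    · rintro ⟨x, hx, rfl⟩
      exact ⟨e.symm ⟨x, hx⟩, by simp only []; rw [hεsymm x hx]⟩
    · rintro ⟨j, rfl⟩
      exact ⟨ε j, hεS j, rfl⟩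
  have hcoef : ∀ k, ∃ f : Fin Δ → F, ∑ j, f j • c (ε j) = c k := by
    intro k
    have h := hSspan k
    rw [hrange] at h
    exact (Submodule.mem_span_range_iff_exists_fun F).1 h
  choose f hf using hcoef
  set Q : Matrix (Fin Δ) (Fin (Δ + m)) F := fun j k =>
    if hk : k ∈ S then (if j = e.symm ⟨k, hk⟩ then 1 else 0) else f k j with hQ
  refine ⟨fun i j => B i (ε j), Q, ?_, ?_⟩
  · ext i k
    erw [Matrix.mul_apply]
    by_cases hk : k ∈ S
    · simp only [hQ, hk, dif_pos, mul_ite, mul_one, mul_zero, Finset.sum_ite_eq',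
        Finset.mem_univ, if_pos]
      rw [hεsymm k hk]
    · have h := congrFun (hf k) i
      simp only [Finset.sum_apply, Pi.smul_apply, smul_eq_mul] at h
      simp only [hQ, hk, dif_neg, not_false_iff]
      have hck : c k i = B i k := rfl
      rw [← hck, ← h]
      exact Finset.sum_congr rfl fun j _ => (mul_comm _ _)
  · intro i
    have hsub : (Finset.univ.filter fun k => Q i k ≠ 0) ⊆ insert (ε i) Sᶜ := by
      intro k hk
      simp only [Finset.mem_filter, Finset.mem_univ, true_and] at hk
      by_cases hkS : k ∈ S
      · simp only [hQ, hkS, dif_pos] at hk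
        have : i = e.symm ⟨k, hkS⟩ := by by_contra h; exact hk (if_neg h)
        have : ε i = k := by rw [this, hεsymm]
        simp [this]
      · exact Finset.mem_insert_of_mem (Finset.mem_compl.2 hkS)
    have h1 : Nat.card {k : Fin (Δ + m) // Q i k ≠ 0}
        = (Finset.univ.filter fun k => Q i k ≠ 0).card := by
      rw [Nat.card_eq_fintype_card, Fintype.card_subtype]
    rw [h1]
    calc (Finset.univ.filter fun k => Q i k ≠ 0).card
        ≤ (insert (ε i) Sᶜ).card := Finset.card_le_card hsub
      _ ≤ Sᶜ.card + 1 := Finset.card_insert_le _ _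
      _ ≤ m + 1 := by
          rw [Finset.card_compl, hScard, Fintype.card_fin]
          omega



/-- Achievability (Theorem 1, divisible case) as a matrix factorization: over
an infinite field, when Δ ∣ L and (Δ+M−1) ∣ K, every L×K matrix D factors as
D = C·A with inner dimension R = LK/(Δ+M−1), where the columns of C are
Δ-sparse and the rows of A are M-sparse. -/
theorem stmt15 (F : Type*) [Field F] [Infinite F] (L K Δ M : ℕ)
    (hL : 1 ≤ L) (hK : 1 ≤ K) (hΔ : 1 ≤ Δ) (hM : 1 ≤ M)
    (hΔL : Δ ∣ L) (hdiv : (Δ + M - 1) ∣ K)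
    (D : Matrix (Fin L) (Fin K) F) :
    ∃ (C : Matrix (Fin L) (Fin (L * K / (Δ + M - 1))) F)
      (A : Matrix (Fin (L * K / (Δ + M - 1))) (Fin K) F),
      D = C * A ∧
      (∀ r, Nat.card {l : Fin L // C l r ≠ 0} ≤ Δ) ∧
      (∀ r, Nat.card {k : Fin K // A r k ≠ 0} ≤ M) := by
  classical
  obtain ⟨a, ha⟩ := hΔL
  obtain ⟨b, hb⟩ := hdiv
  have hnpos : 0 < Δ + M - 1 := by omega
  have hb' : K = (Δ + (M - 1)) * b := by rw [hb]; congr 1; omega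
  have hR : L * K / (Δ + M - 1) = Δ * (a * b) := by
    rw [ha, hb]
    have : Δ * a * ((Δ + M - 1) * b) = (Δ + M - 1) * (Δ * (a * b)) := by ring
    rw [this, Nat.mul_div_cancel_left _ hnpos]
  set eL : Fin L ≃ Fin Δ × Fin a := (finCongr ha).trans finProdFinEquiv.symm with heL
  set eK : Fin K ≃ Fin (Δ + (M - 1)) × Fin b := (finCongr hb').trans finProdFinEquiv.symm with heK
  set eR : Fin (L * K / (Δ + M - 1)) ≃ Fin Δ × (Fin a × Fin b) :=
    (finCongr hR).trans (finProdFinEquiv.symm.trans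
      ((Equiv.refl (Fin Δ)).prodCongr finProdFinEquiv.symm)) with heR
  have hblk : ∀ (α : Fin a) (β : Fin b),
      ∃ (P : Matrix (Fin Δ) (Fin Δ) F) (Q : Matrix (Fin Δ) (Fin (Δ + (M - 1))) F),
        (fun i u => D (eL.symm (i, α)) (eK.symm (u, β))) = P * Q ∧
        ∀ i, Nat.card {u : Fin (Δ + (M - 1)) // Q i u ≠ 0} ≤ (M - 1) + 1 :=
    fun α β => block_factor F Δ (M - 1) _
  choose P Q hPQ hQs using hblk
  refine ⟨fun l r => if (eL l).2 = (eR r).2.1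
      then P (eR r).2.1 (eR r).2.2 (eL l).1 (eR r).1 else 0,
    fun r k => if (eR r).2.2 = (eK k).2
      then Q (eR r).2.1 (eR r).2.2 (eR r).1 (eK k).1 else 0, ?_, ?_, ?_⟩
  · ext l k
    erw [Matrix.mul_apply]
    rw [← Equiv.sum_comp eR.symm]
    simp only [Equiv.apply_symm_apply]
    rw [Fintype.sum_prod_type]
    have hterm : ∀ (j : Fin Δ),
        (∑ q : Fin a × Fin b,
          (if (eL l).2 = q.1 then P q.1 q.2 (eL l).1 j else 0) *
          (if q.2 = (eK k).2 then Q q.1 q.2 j (eK k).1 else 0))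
        = P (eL l).2 (eK k).2 (eL l).1 j * Q (eL l).2 (eK k).2 j (eK k).1 := by
      intro j
      rw [Fintype.sum_prod_type]
      simp [ite_mul, zero_mul, mul_ite, mul_zero, Finset.sum_ite_eq, Finset.sum_ite_eq',
        eq_comm]
    simp only [hterm]
    have h := congrFun (congrFun (hPQ (eL l).2 (eK k).2) (eL l).1) (eK k).1
    simp only [Matrix.mul_apply] at h
    rw [← h]
    simp
  · intro r
    have hinj : Function.Injective
        (fun l : {l : Fin L // (if (eL l).2 = (eR r).2.1
            then P (eR r).2.1 (eR r).2.2 (eL l).1 (eR r).1 else 0) ≠ 0} => (eL l.1).1) := by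
      rintro ⟨l₁, h₁⟩ ⟨l₂, h₂⟩ hl
      have e₁ : (eL l₁).2 = (eR r).2.1 := by by_contra h; exact h₁ (if_neg h)
      have e₂ : (eL l₂).2 = (eR r).2.1 := by by_contra h; exact h₂ (if_neg h)
      have : eL l₁ = eL l₂ := Prod.ext hl (e₁.trans e₂.symm)
      exact Subtype.ext (eL.injective this)
    have := Nat.card_le_card_of_injective _ hinj
    simpa using this
  · intro r
    have hκ : ∀ k : Fin K, (if (eR r).2.2 = (eK k).2
        then Q (eR r).2.1 (eR r).2.2 (eR r).1 (eK k).1 else 0) ≠ 0 →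
        Q (eR r).2.1 (eR r).2.2 (eR r).1 (eK k).1 ≠ 0 := by
      intro k hk
      by_cases h : (eR r).2.2 = (eK k).2
      · rwa [if_pos h] at hk
      · exact absurd (if_neg h) hk
    have hinj : Function.Injective
        (fun k : {k : Fin K // (if (eR r).2.2 = (eK k).2
            then Q (eR r).2.1 (eR r).2.2 (eR r).1 (eK k).1 else 0) ≠ 0} =>
          (⟨(eK k.1).1, hκ k.1 k.2⟩ : {u : Fin (Δ + (M - 1)) // Q (eR r).2.1 (eR r).2.2 (eR r).1 u ≠ 0})) := by
      rintro ⟨k₁, h₁⟩ ⟨k₂, h₂⟩ hk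
      have e₁ : (eR r).2.2 = (eK k₁).2 := by by_contra h; exact h₁ (if_neg h)
      have e₂ : (eR r).2.2 = (eK k₂).2 := by by_contra h; exact h₂ (if_neg h)
      have h1 : (eK k₁).1 = (eK k₂).1 := congrArg Subtype.val hk
      have : eK k₁ = eK k₂ := Prod.ext h1 (e₁.symm.trans e₂)
      exact Subtype.ext (eK.injective this)
    have hle := Nat.card_le_card_of_injective _ hinj
    exact le_trans hle (le_trans (hQs (eR r).2.1 (eR r).2.2 (eR r).1) (by omega))
end
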